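/- Let d ≥ 1 and let F : ℂ^4 → M_{2×2}(ℂ) be given by F(x₁,x₂,x₃,x₄) = [[x₁^d − x₂^d, x₃^d + x₄^d],[x₃^d − x₄^d, x₁^d + x₂^d]]. Then F defines an EIDS: for every x ∈ ℂ^4 with x ≠ 0, im(DF_x) + {B ∈ M_{2×2}(ℂ) : B(ker F(x)) ⊆ im F(x)} = M_{2×2}(ℂ). -/

import Mathlib

/-- The tangent space at `A` to the stratum of `m×n` matrices of the same rank as `A`:
matrices `B` with `B(ker A) ⊆ im A`. -/
def rankStratumTangent {m n : ℕ} (A : Matrix (Fin m) (Fin n) ℂ) :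
    Set (Matrix (Fin m) (Fin n) ℂ) :=
  {B | ∀ u : Fin n → ℂ, A.mulVec u = 0 → ∃ z : Fin n → ℂ, B.mulVec u = A.mulVec z}

/-- `F` is transverse at `x` to the rank stratum through `F(x)`:
`im(DF_x) + T_{F(x)} = M_{m×n}(ℂ)`. -/
def TransverseAt {N m n : ℕ} (F : (Fin N → ℂ) → Matrix (Fin m) (Fin n) ℂ)
    (x : Fin N → ℂ) : Prop :=
  ∀ C : Matrix (Fin m) (Fin n) ℂ, ∃ (v : Fin N → ℂ) (B : Matrix (Fin m) (Fin n) ℂ),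
    B ∈ rankStratumTangent (F x) ∧
    C = Matrix.of (fderiv ℂ (fun y i j => F y i j) x v) + B

/-- explicit adjugate of a 2×2 matrix -/
def adj2 (M : Matrix (Fin 2) (Fin 2) ℂ) : Matrix (Fin 2) (Fin 2) ℂ :=
  !![M 1 1, -(M 0 1); -(M 1 0), M 0 0]

lemma adj2_adj2 (M : Matrix (Fin 2) (Fin 2) ℂ) : adj2 (adj2 M) = M := by
  ext i j; fin_cases i <;> fin_cases j <;> simp [adj2]

lemma adj2_zero : adj2 0 = 0 := by
  ext i j; fin_cases i <;> fin_cases j <;> simp [adj2]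

lemma adj2_ne_zero {M : Matrix (Fin 2) (Fin 2) ℂ} (hM : M ≠ 0) : adj2 M ≠ 0 := by
  intro h
  apply hM
  rw [← adj2_adj2 M, h, adj2_zero]

lemma det_adj2 (M : Matrix (Fin 2) (Fin 2) ℂ) : (adj2 M).det = M.det := by
  simp [adj2, Matrix.det_fin_two]; ring

lemma ker_sub_im_adj2 (M : Matrix (Fin 2) (Fin 2) ℂ) (hM : M ≠ 0)
    (u : Fin 2 → ℂ) (hu : M.mulVec u = 0) : ∃ z, u = (adj2 M).mulVec z := by
  have h0 := congrFun hu 0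
  have h1 := congrFun hu 1
  simp [Matrix.mulVec, dotProduct, Fin.sum_univ_two] at h0 h1
  by_cases ha : M 0 0 ≠ 0
  · refine ⟨![0, u 1 / M 0 0], ?_⟩
    funext i; fin_cases i <;>
      simp [adj2, Matrix.mulVec, dotProduct, Fin.sum_univ_two] <;>
      field_simp <;> linear_combination h0
  · by_cases hb : M 0 1 ≠ 0
    · refine ⟨![0, -(u 0) / M 0 1], ?_⟩
      funext i; fin_cases i <;>
        simp [adj2, Matrix.mulVec, dotProduct, Fin.sum_univ_two] <;>
        field_simp <;> linear_combination h0
    · by_cases hc : M 1 0 ≠ 0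
      · refine ⟨![-(u 1) / M 1 0, 0], ?_⟩
        funext i; fin_cases i <;>
          simp [adj2, Matrix.mulVec, dotProduct, Fin.sum_univ_two] <;>
          field_simp <;> linear_combination h1
      · by_cases he : M 1 1 ≠ 0
        · refine ⟨![u 0 / M 1 1, 0], ?_⟩
          funext i; fin_cases i <;>
            simp [adj2, Matrix.mulVec, dotProduct, Fin.sum_univ_two] <;>
            field_simp <;> linear_combination h1
        · exfalso; apply hM
          push_neg at ha hb hc he
          ext i j; fin_cases i <;> fin_cases j <;> simpa

lemma sandwich (X C : Matrix (Fin 2) (Fin 2) ℂ) (h : X.det = 0) :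
    X * C * X = (X * C).trace • X := by
  rw [Matrix.det_fin_two] at h
  ext i j
  fin_cases i <;> fin_cases j <;>
    simp [Matrix.mul_apply, Fin.sum_univ_two, Matrix.trace_fin_two] <;>
    [linear_combination (-(C 1 1)) * h; linear_combination C 0 1 * h;
     linear_combination C 1 0 * h; linear_combination (-(C 0 0)) * h]

lemma mem_tangent (A B : Matrix (Fin 2) (Fin 2) ℂ) (hdet : A.det = 0) (hA : A ≠ 0)
    (h : adj2 A * B * adj2 A = 0) : B ∈ rankStratumTangent A := by
  intro u hu
  obtain ⟨z, hz⟩ := ker_sub_im_adj2 A hA u hu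
  have h2 : (adj2 A).mulVec (B.mulVec u) = 0 := by
    rw [hz, Matrix.mulVec_mulVec, Matrix.mulVec_mulVec, h, Matrix.zero_mulVec]
  obtain ⟨z', hz'⟩ := ker_sub_im_adj2 (adj2 A) (adj2_ne_zero hA) _ h2
  exact ⟨z', by rw [hz', adj2_adj2]⟩

lemma solve_mem (A M C : Matrix (Fin 2) (Fin 2) ℂ) (hdet : A.det = 0) (hA : A ≠ 0)
    (hM : (adj2 A * M).trace ≠ 0) :
    C - ((adj2 A * C).trace / (adj2 A * M).trace) • M ∈ rankStratumTangent A := by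
  apply mem_tangent _ _ hdet hA
  rw [sandwich _ _ (by rw [det_adj2]; exact hdet)]
  have htr : (adj2 A * (C - ((adj2 A * C).trace / (adj2 A * M).trace) • M)).trace = 0 := by
    rw [Matrix.mul_sub, Matrix.mul_smul, Matrix.trace_sub, Matrix.trace_smul, smul_eq_mul]
    field_simp
    ring
  rw [htr, zero_smul]

open ContinuousLinearMap in
lemma deriv_formula (d : ℕ) (x v : Fin 4 → ℂ) :
    Matrix.of (fderiv ℂ (fun y : Fin 4 → ℂ => fun i j =>
        (!![y 0 ^ d - y 1 ^ d, y 2 ^ d + y 3 ^ d;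
            y 2 ^ d - y 3 ^ d, y 0 ^ d + y 1 ^ d] : Matrix (Fin 2) (Fin 2) ℂ) i j) x v)
      = !![(d : ℂ) * x 0 ^ (d-1) * v 0 - (d : ℂ) * x 1 ^ (d-1) * v 1,
           (d : ℂ) * x 2 ^ (d-1) * v 2 + (d : ℂ) * x 3 ^ (d-1) * v 3;
           (d : ℂ) * x 2 ^ (d-1) * v 2 - (d : ℂ) * x 3 ^ (d-1) * v 3,
           (d : ℂ) * x 0 ^ (d-1) * v 0 + (d : ℂ) * x 1 ^ (d-1) * v 1] := by
  have hk : ∀ k : Fin 4, HasFDerivAt (fun y : Fin 4 → ℂ => y k ^ d)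
      ((((d : ℂ) * x k ^ (d-1)) • ContinuousLinearMap.proj k : (Fin 4 → ℂ) →L[ℂ] ℂ)) x := by
    intro k
    have := (hasDerivAt_pow d (x k)).comp_hasFDerivAt x (hasFDerivAt_apply (𝕜 := ℂ) k x)
    exact this
  have hL : HasFDerivAt (fun y : Fin 4 → ℂ => fun i j =>
        (!![y 0 ^ d - y 1 ^ d, y 2 ^ d + y 3 ^ d;
            y 2 ^ d - y 3 ^ d, y 0 ^ d + y 1 ^ d] : Matrix (Fin 2) (Fin 2) ℂ) i j)
      (ContinuousLinearMap.pi fun i => ContinuousLinearMap.pi fun j =>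
        (!![((d : ℂ) * x 0 ^ (d-1)) • proj 0 - ((d : ℂ) * x 1 ^ (d-1)) • proj 1,
            ((d : ℂ) * x 2 ^ (d-1)) • proj 2 + ((d : ℂ) * x 3 ^ (d-1)) • proj 3;
            ((d : ℂ) * x 2 ^ (d-1)) • proj 2 - ((d : ℂ) * x 3 ^ (d-1)) • proj 3,
            ((d : ℂ) * x 0 ^ (d-1)) • proj 0 + ((d : ℂ) * x 1 ^ (d-1)) • proj 1]
          : Matrix (Fin 2) (Fin 2) ((Fin 4 → ℂ) →L[ℂ] ℂ)) i j) x := by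
    apply hasFDerivAt_pi.mpr
    intro i
    apply hasFDerivAt_pi.mpr
    intro j
    fin_cases i <;> fin_cases j <;> simp <;>
      [exact (hk 0).sub (hk 1); exact (hk 2).add (hk 3);
       exact (hk 2).sub (hk 3); exact (hk 0).add (hk 1)]
  rw [hL.fderiv]
  ext i j
  fin_cases i <;> fin_cases j <;>
    simp [ContinuousLinearMap.pi_apply, ContinuousLinearMap.smul_apply,
      ContinuousLinearMap.proj_apply, ContinuousLinearMap.sub_apply,
      ContinuousLinearMap.add_apply]

/-- For `d ≥ 1`, the map
`F(x) = [[x₁^d − x₂^d, x₃^d + x₄^d],[x₃^d − x₄^d, x₁^d + x₂^d]]` defines an EIDS: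
it is transverse to the rank stratum through `F(x)` at every `x ≠ 0`. -/
theorem example_two_by_two_EIDS
    (d : ℕ) (hd : 1 ≤ d) (x : Fin 4 → ℂ) (hx : x ≠ 0) :
    TransverseAt
      (fun x : Fin 4 → ℂ =>
        (!![x 0 ^ d - x 1 ^ d, x 2 ^ d + x 3 ^ d;
            x 2 ^ d - x 3 ^ d, x 0 ^ d + x 1 ^ d] : Matrix (Fin 2) (Fin 2) ℂ)) x := by
  intro C
  beta_reduce
  set A : Matrix (Fin 2) (Fin 2) ℂ :=
    !![x 0 ^ d - x 1 ^ d, x 2 ^ d + x 3 ^ d;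
       x 2 ^ d - x 3 ^ d, x 0 ^ d + x 1 ^ d] with hAdef
  by_cases hdet : A.det = 0
  · -- singular case
    have hA : A ≠ 0 := by
      intro h0
      apply hx
      have e00 : x 0 ^ d - x 1 ^ d = 0 := by
        have := congrFun (congrFun h0 0) 0; simpa [hAdef] using this
      have e11 : x 0 ^ d + x 1 ^ d = 0 := by
        have := congrFun (congrFun h0 1) 1; simpa [hAdef] using this
      have e01 : x 2 ^ d + x 3 ^ d = 0 := by
        have := congrFun (congrFun h0 0) 1; simpa [hAdef] using this
      have e10 : x 2 ^ d - x 3 ^ d = 0 := by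
        have := congrFun (congrFun h0 1) 0; simpa [hAdef] using this
      have hd0 : d ≠ 0 := by omega
      have h0' : x 0 = 0 := by
        have : x 0 ^ d = 0 := by linear_combination (e00 + e11) / 2
        exact pow_eq_zero_iff hd0 |>.mp this
      have h1' : x 1 = 0 := by
        have : x 1 ^ d = 0 := by linear_combination (e11 - e00) / 2
        exact pow_eq_zero_iff hd0 |>.mp this
      have h2' : x 2 = 0 := by
        have : x 2 ^ d = 0 := by linear_combination (e01 + e10) / 2
        exact pow_eq_zero_iff hd0 |>.mp this
      have h3' : x 3 = 0 := by
        have : x 3 ^ d = 0 := by linear_combination (e01 - e10) / 2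
        exact pow_eq_zero_iff hd0 |>.mp this
      funext k
      fin_cases k <;> assumption
    obtain ⟨i, hi⟩ : ∃ i, x i ≠ 0 := by
      by_contra h; push_neg at h; exact hx (funext h)
    have hd0 : (d : ℂ) ≠ 0 := Nat.cast_ne_zero.mpr (by omega)
    fin_cases i
    -- in each case: choose the matrix direction M, compute trace, finish
    · -- x 0 ≠ 0, direction M = identity pattern
      have hc : (d : ℂ) * x 0 ^ (d - 1) ≠ 0 := mul_ne_zero hd0 (pow_ne_zero _ hi)
      set M : Matrix (Fin 2) (Fin 2) ℂ := !![1, 0; 0, 1] with hM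
      have htr : (adj2 A * M).trace = 2 * x 0 ^ d := by
        simp [adj2, hAdef, hM, Matrix.trace_fin_two, Matrix.mul_apply, Fin.sum_univ_two]
        ring
      have htrne : (adj2 A * M).trace ≠ 0 := by
        rw [htr]; exact mul_ne_zero two_ne_zero (pow_ne_zero _ hi)
      set μ : ℂ := (adj2 A * C).trace / (adj2 A * M).trace with hμ
      refine ⟨Pi.single 0 (μ / ((d : ℂ) * x 0 ^ (d - 1))), C - μ • M, solve_mem A M C hdet hA htrne, ?_⟩
      rw [deriv_formula]
      ext a b
      fin_cases a <;> fin_cases b <;>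
        simp [hM, Pi.single_apply] <;> field_simp [(mul_ne_zero_iff.mp hc).2] <;> ring
    · have hc : (d : ℂ) * x 1 ^ (d - 1) ≠ 0 := mul_ne_zero hd0 (pow_ne_zero _ hi)
      set M : Matrix (Fin 2) (Fin 2) ℂ := !![-1, 0; 0, 1] with hM
      have htr : (adj2 A * M).trace = -(2 * x 1 ^ d) := by
        simp [adj2, hAdef, hM, Matrix.trace_fin_two, Matrix.mul_apply, Fin.sum_univ_two]
        ring
      have htrne : (adj2 A * M).trace ≠ 0 := by
        rw [htr]; exact neg_ne_zero.mpr (mul_ne_zero two_ne_zero (pow_ne_zero _ hi))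
      set μ : ℂ := (adj2 A * C).trace / (adj2 A * M).trace with hμ
      refine ⟨Pi.single 1 (μ / ((d : ℂ) * x 1 ^ (d - 1))), C - μ • M, solve_mem A M C hdet hA htrne, ?_⟩
      rw [deriv_formula]
      ext a b
      fin_cases a <;> fin_cases b <;>
        simp [hM, Pi.single_apply] <;> field_simp [(mul_ne_zero_iff.mp hc).2] <;> ring
    · have hc : (d : ℂ) * x 2 ^ (d - 1) ≠ 0 := mul_ne_zero hd0 (pow_ne_zero _ hi)
      set M : Matrix (Fin 2) (Fin 2) ℂ := !![0, 1; 1, 0] with hM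
      have htr : (adj2 A * M).trace = -(2 * x 2 ^ d) := by
        simp [adj2, hAdef, hM, Matrix.trace_fin_two, Matrix.mul_apply, Fin.sum_univ_two]
        ring
      have htrne : (adj2 A * M).trace ≠ 0 := by
        rw [htr]; exact neg_ne_zero.mpr (mul_ne_zero two_ne_zero (pow_ne_zero _ hi))
      set μ : ℂ := (adj2 A * C).trace / (adj2 A * M).trace with hμ
      refine ⟨Pi.single 2 (μ / ((d : ℂ) * x 2 ^ (d - 1))), C - μ • M, solve_mem A M C hdet hA htrne, ?_⟩
      rw [deriv_formula]
      ext a b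
      fin_cases a <;> fin_cases b <;>
        simp [hM, Pi.single_apply] <;> field_simp [(mul_ne_zero_iff.mp hc).2] <;> ring
    · have hc : (d : ℂ) * x 3 ^ (d - 1) ≠ 0 := mul_ne_zero hd0 (pow_ne_zero _ hi)
      set M : Matrix (Fin 2) (Fin 2) ℂ := !![0, 1; -1, 0] with hM
      have htr : (adj2 A * M).trace = 2 * x 3 ^ d := by
        simp [adj2, hAdef, hM, Matrix.trace_fin_two, Matrix.mul_apply, Fin.sum_univ_two]
        ring
      have htrne : (adj2 A * M).trace ≠ 0 := by
        rw [htr]; exact mul_ne_zero two_ne_zero (pow_ne_zero _ hi)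
      set μ : ℂ := (adj2 A * C).trace / (adj2 A * M).trace with hμ
      refine ⟨Pi.single 3 (μ / ((d : ℂ) * x 3 ^ (d - 1))), C - μ • M, solve_mem A M C hdet hA htrne, ?_⟩
      rw [deriv_formula]
      ext a b
      fin_cases a <;> fin_cases b <;>
        simp [hM, Pi.single_apply] <;> field_simp [(mul_ne_zero_iff.mp hc).2] <;> ring
  · -- invertible case
    refine ⟨0, C, ?_, ?_⟩
    · intro u hu
      have hu0 : u = 0 := by
        have h2 : A⁻¹.mulVec (A.mulVec u) = A⁻¹.mulVec 0 := by rw [hu]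
        rwa [Matrix.mulVec_mulVec, Matrix.nonsing_inv_mul A (Ne.isUnit hdet),
          Matrix.one_mulVec, Matrix.mulVec_zero] at h2
      refine ⟨0, ?_⟩
      rw [hu0, Matrix.mulVec_zero, Matrix.mulVec_zero]
    · rw [map_zero]
      show C = Matrix.of (0 : Fin 2 → Fin 2 → ℂ) + C
      ext a b
      simp
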